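/- arXiv:2512.09180 — 5 statements merged into one kernel-verified Lean document; each statement's English description precedes it below -/
import Mathlib

section
/- Let Γ be a group. Suppose Γ has a subgroup A such that (i) A is not approximable with respect to the family, and (ii) every element a ∈ A with a ≠ 1 normally generates Γ (the normal closure of {a} in Γ is all of Γ). Then every quotient of Γ that is approximable with respect to the family is trivial; that is, for every normal subgroup N of Γ, if Γ/N is approximable then N = Γ. -/
open Filter Topology

/-- A sequence of maps `φ n : Γ → G (idx n)` into groups with metrics is an *asymptotic
homomorphism* if `d(φ n (g * h), φ n g * φ n h) → 0` for all `g h : Γ`. -/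
def IsAsymptoticHom {I : Type*} (G : I → Type*) [∀ i, Group (G i)] [∀ i, MetricSpace (G i)]
    {Γ : Type*} [Group Γ] (idx : ℕ → I) (φ : ∀ n, Γ → G (idx n)) : Prop :=
  ∀ g h : Γ, Tendsto (fun n => dist (φ n (g * h)) (φ n g * φ n h)) atTop (𝓝 0)

/-- A group `Γ` is *approximable* with respect to the family `G` if it admits an asymptotic
homomorphism `(idx, φ)` such that `liminf_n d(φ n g, 1) > 0` for every `g ≠ 1`. -/
def Approximable {I : Type*} (G : I → Type*) [∀ i, Group (G i)] [∀ i, MetricSpace (G i)]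
    (Γ : Type*) [Group Γ] : Prop :=
  ∃ (idx : ℕ → I) (φ : ∀ n, Γ → G (idx n)), IsAsymptoticHom G idx φ ∧
    ∀ g : Γ, g ≠ 1 → 0 < atTop.liminf (fun n => dist (φ n g) 1)

/-- If `Γ` has a non-approximable subgroup `A` such that every non-identity element of `A`
normally generates `Γ`, then every approximable quotient of `Γ` is trivial. -/
theorem no_approximable_quotient_of_nonapproximable_subgroup
    {I : Type*} (G : I → Type*) [∀ i, Group (G i)] [∀ i, MetricSpace (G i)]
    (hbi : ∀ (i : I) (a x y : G i),
      dist (a * x) (a * y) = dist x y ∧ dist (x * a) (y * a) = dist x y)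
    {Γ : Type*} [Group Γ] (A : Subgroup Γ)
    (hA : ¬ Approximable G ↥A)
    (hgen : ∀ a ∈ A, a ≠ 1 → Subgroup.normalClosure {a} = ⊤)
    (N : Subgroup Γ) [N.Normal] (hq : Approximable G (Γ ⧸ N)) :
    N = ⊤ := by
  by_contra hN
  apply hA
  obtain ⟨idx, φ, hhom, hsep⟩ := hq
  refine ⟨idx, fun n a => φ n (QuotientGroup.mk a.val), ?_, ?_⟩
  · intro g h
    simpa using hhom ((g : Γ) : Γ ⧸ N) ((h : Γ) : Γ ⧸ N)
  · intro g hg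
    apply hsep
    intro hg1
    have hmem : (g : Γ) ∈ N := (QuotientGroup.eq_one_iff _).mp hg1
    have hne : (g : Γ) ≠ 1 := fun h => hg (Subtype.ext h)
    have htop := hgen (g : Γ) g.2 hne
    exact hN (top_le_iff.mp
      (htop ▸ Subgroup.normalClosure_le_normal (by simpa using hmem)))
end

section
/- Let Γ be a group and Λ a subgroup of Γ such that (Γ, Λ, Λ) is a Cohen–Lyndon triple. Let k be a commutative ring and V a k-linear representation of Γ̄ := Γ/⟪Λ⟫, regarded as a representation of Γ via the quotient map π and as a (trivial) representation of Λ by restriction. If H^1(Γ; V) = 0, then there is an injective k-linear map from H^1(Λ; V) into H^2(Γ̄; V). -/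
open Subgroup

theorem conj_le_normalClosure {Γ : Type*} [Group Γ] (Λ : Subgroup Γ) (t : Γ) :
    Λ.map (MulAut.conj t).toMonoidHom ≤ Subgroup.normalClosure (Λ : Set Γ) := by
  rintro x ⟨y, hy, rfl⟩
  exact Subgroup.normalClosure_normal.conj_mem _ (subset_normalClosure hy) t

/-- `(Γ, Λ, Λ)` is a *Cohen–Lyndon triple* if there is a left transversal `T` of `Λ ⬝ ⟪Λ⟫` in `Γ`
such that the canonical homomorphism `∗_{t ∈ T} tΛt⁻¹ → ⟪Λ⟫` is an isomorphism. -/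
def IsCohenLyndonTriple {Γ : Type*} [Group Γ] (Λ : Subgroup Γ) : Prop :=
  ∃ T : Set Γ,
    (∀ g : Γ, ∃! t : T, (t : Γ)⁻¹ * g ∈ Λ ⊔ Subgroup.normalClosure (Λ : Set Γ)) ∧
    Function.Bijective
      (Monoid.CoprodI.lift fun t : T => inclusion (conj_le_normalClosure Λ (t : Γ)))

universe u

variable {Γ : Type u} [Group Γ] (Λ : Subgroup Γ) (k : Type u) [CommRing k]
  (V : Rep k (Γ ⧸ Subgroup.normalClosure (Λ : Set Γ)))

/-- A representation of `Γ ⧸ ⟪Λ⟫` regarded as a representation of `Γ` via the quotient map. -/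
noncomputable def repOfQuotient : Rep k Γ :=
  Rep.of (V.ρ.comp (QuotientGroup.mk' (Subgroup.normalClosure (Λ : Set Γ))))

/-- A representation of `Γ ⧸ ⟪Λ⟫` regarded as a representation of `Λ` by restricting the above. -/
noncomputable def repOfQuotientRes : Rep k ↥Λ :=
  Rep.of (V.ρ.comp ((QuotientGroup.mk' (Subgroup.normalClosure (Λ : Set Γ))).comp Λ.subtype))

namespace CLAux

variable {G : Type u} [Group G] (L : Subgroup G) {R : Type u} [CommRing R]
  (W : Rep R (G ⧸ Subgroup.normalClosure (L : Set G))) (T : Set G)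

lemma L_le_N : L ≤ Subgroup.normalClosure (L : Set G) :=
  fun _ hx => Subgroup.subset_normalClosure hx

lemma conj_mem' {x : G} (hx : x ∈ Subgroup.normalClosure (L : Set G)) (g : G) :
    g * x * g⁻¹ ∈ Subgroup.normalClosure (L : Set G) :=
  Subgroup.normalClosure_normal.conj_mem x hx g

lemma mk_eq_one {g : G} (h : g ∈ Subgroup.normalClosure (L : Set G)) :
    (QuotientGroup.mk g : G ⧸ Subgroup.normalClosure (L : Set G)) = 1 :=
  (QuotientGroup.eq_one_iff g).2 h

/-- pull back an element of `t L t⁻¹` to `L`. -/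
def conjBack (t : G) (x : ↥(L.map (MulAut.conj t).toMonoidHom)) : L :=
  ⟨t⁻¹ * x * t, by
    obtain ⟨y, hy, h⟩ := x.2
    have : t⁻¹ * (x : G) * t = y := by
      rw [← h]; simp [MulAut.conj_apply]; group
    exact this ▸ hy⟩

lemma conjBack_coe (t : G) (x : ↥(L.map (MulAut.conj t).toMonoidHom)) :
    ((conjBack L t x : L) : G) = t⁻¹ * x * t := rfl

lemma coe_eq_conj (t : G) (x : ↥(L.map (MulAut.conj t).toMonoidHom)) :
    (x : G) = t * (conjBack L t x : L) * t⁻¹ := by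
  rw [conjBack_coe]; group

lemma conjBack_mul (t : G) (x y : ↥(L.map (MulAut.conj t).toMonoidHom)) :
    conjBack L t (x * y) = conjBack L t x * conjBack L t y := by
  apply Subtype.ext
  show t⁻¹ * (↑x * ↑y) * t = (t⁻¹ * ↑x * t) * (t⁻¹ * ↑y * t)
  group

end CLAux

namespace CLAux

variable {G : Type u} [Group G] (L : Subgroup G) {R : Type u} [CommRing R]
  (W : Rep R (G ⧸ Subgroup.normalClosure (L : Set G))) (T : Set G)

variable (ψ : L → W)

lemma psi_one (hψ : ∀ a b : L, ψ (a * b) = ψ a + ψ b) : ψ 1 = 0 := by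
  have := hψ 1 1
  rw [one_mul] at this
  exact add_eq_left.1 this.symm

lemma psi_inv (hψ : ∀ a b : L, ψ (a * b) = ψ a + ψ b) (a : L) : ψ a⁻¹ = - ψ a := by
  have := hψ a a⁻¹
  rw [mul_inv_cancel, psi_one L W ψ hψ] at this
  exact eq_neg_of_add_eq_zero_right (by rw [← hψ, mul_inv_cancel, psi_one L W ψ hψ])

lemma psi_conj (hψ : ∀ a b : L, ψ (a * b) = ψ a + ψ b) (a l : L) : ψ (a * l * a⁻¹) = ψ l := by
  rw [hψ, hψ, psi_inv L W ψ hψ]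
  abel

end CLAux

namespace CLAux2

open CLAux Monoid

variable {G : Type u} [Group G] (L : Subgroup G) {R : Type u} [CommRing R]
  (W : Rep R (G ⧸ Subgroup.normalClosure (L : Set G))) (T : Set G)
  (ψ : L → W)

/-- the free-product hom sending `t l t⁻¹` in the `t` factor to `ρ(t)(ψ l)`. -/
noncomputable def ext1 (hψ : ∀ a b : L, ψ (a * b) = ψ a + ψ b) :
    Monoid.CoprodI (fun t : T => ↥(L.map (MulAut.conj (t : G)).toMonoidHom)) →*
      Multiplicative W :=
  Monoid.CoprodI.lift fun t => MonoidHom.mk'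
    (fun x => Multiplicative.ofAdd
      (W.ρ (QuotientGroup.mk (t : G)) (ψ (conjBack L (t : G) x))))
    (fun x y => by
      rw [conjBack_mul, hψ, map_add]; rfl)

variable (hbij : Function.Bijective
      (Monoid.CoprodI.lift fun t : T => inclusion (conj_le_normalClosure L (t : G))))

/-- the Cohen-Lyndon isomorphism. -/
noncomputable def clEquiv :
    Monoid.CoprodI (fun t : T => ↥(L.map (MulAut.conj (t : G)).toMonoidHom)) ≃*
      ↥(Subgroup.normalClosure (L : Set G)) :=
  MulEquiv.ofBijective _ hbij

/-- the equivariant extension of `ψ` to the normal closure. -/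
noncomputable def Phi (hψ : ∀ a b : L, ψ (a * b) = ψ a + ψ b) :
    ↥(Subgroup.normalClosure (L : Set G)) →* Multiplicative W :=
  (ext1 L W T ψ hψ).comp (clEquiv L T hbij).symm.toMonoidHom

lemma mem_tlt (t : G) (l : L) : t * l * t⁻¹ ∈ Subgroup.normalClosure (L : Set G) :=
  conj_mem' L (L_le_N L l.2) t

lemma clEquiv_of (t : T) (x : ↥(L.map (MulAut.conj (t : G)).toMonoidHom)) :
    clEquiv L T hbij (Monoid.CoprodI.of x) = ⟨(x : G), conj_le_normalClosure L t x.2⟩ := by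
  show (Monoid.CoprodI.lift fun t : T => inclusion (conj_le_normalClosure L (t : G)))
      (Monoid.CoprodI.of x) = _
  rw [Monoid.CoprodI.lift_of]
  rfl

/-- two commutative-monoid-valued homs on the normal closure agreeing on the conjugates agree. -/
lemma homExtN {M : Type*} [CommMonoid M]
    (hbij : Function.Bijective
      (Monoid.CoprodI.lift fun t : T => inclusion (conj_le_normalClosure L (t : G))))
    (F1 F2 : ↥(Subgroup.normalClosure (L : Set G)) →* M)
    (h : ∀ (t : T) (l : L),
      F1 ⟨(t : G) * l * (t : G)⁻¹, mem_tlt L (t : G) l⟩ =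
      F2 ⟨(t : G) * l * (t : G)⁻¹, mem_tlt L (t : G) l⟩) : F1 = F2 := by
  have key : F1.comp (clEquiv L T hbij).toMonoidHom
      = F2.comp (clEquiv L T hbij).toMonoidHom := by
    apply Monoid.CoprodI.ext_hom
    intro t
    ext x
    simp only [MonoidHom.comp_apply, MulEquiv.coe_toMonoidHom, clEquiv_of]
    have hx : (⟨(x : G), conj_le_normalClosure L t x.2⟩ :
        ↥(Subgroup.normalClosure (L : Set G)))
        = ⟨(t : G) * (conjBack L (t : G) x : L) * (t : G)⁻¹, mem_tlt L (t : G) _⟩ :=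
      Subtype.ext (coe_eq_conj L (t : G) x)
    rw [hx]
    exact h t _
  ext n
  obtain ⟨w, rfl⟩ := (clEquiv L T hbij).surjective n
  exact DFunLike.congr_fun key w

lemma Phi_of (hψ : ∀ a b : L, ψ (a * b) = ψ a + ψ b) (t : T) (l : L) :
    Phi L W T ψ hbij hψ ⟨(t : G) * l * (t : G)⁻¹, mem_tlt L (t : G) l⟩ =
      Multiplicative.ofAdd (W.ρ (QuotientGroup.mk (t : G)) (ψ l)) := by
  have hmem : (t : G) * l * (t : G)⁻¹ ∈ L.map (MulAut.conj (t : G)).toMonoidHom :=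
    Subgroup.mem_map.2 ⟨(l : G), l.2, by simp [MulAut.conj_apply]⟩
  set x : ↥(L.map (MulAut.conj (t : G)).toMonoidHom) :=
    ⟨(t : G) * l * (t : G)⁻¹, hmem⟩ with hxdef
  have h1 : (clEquiv L T hbij).symm ⟨(t : G) * l * (t : G)⁻¹, mem_tlt L (t : G) l⟩
      = Monoid.CoprodI.of (M := fun t : T => ↥(L.map (MulAut.conj (t : G)).toMonoidHom)) x := by
    rw [MulEquiv.symm_apply_eq, clEquiv_of]
  show (ext1 L W T ψ hψ) ((clEquiv L T hbij).symm _) = _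
  rw [h1]
  rw [ext1, Monoid.CoprodI.lift_of]
  have h2 : conjBack L (t : G) x = l := Subtype.ext (by
    show (t : G)⁻¹ * ((t : G) * l * (t : G)⁻¹) * t = l
    group)
  show Multiplicative.ofAdd (W.ρ (QuotientGroup.mk (t : G)) (ψ (conjBack L (t : G) x))) = _
  rw [h2]

end CLAux2

namespace CLAux2

open CLAux Monoid

variable {G : Type u} [Group G] (L : Subgroup G) {R : Type u} [CommRing R]
  (W : Rep R (G ⧸ Subgroup.normalClosure (L : Set G))) (T : Set G)
  (ψ : L → W)

lemma sup_eq : L ⊔ Subgroup.normalClosure (L : Set G) = Subgroup.normalClosure (L : Set G) :=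
  sup_eq_right.2 (L_le_N L)

lemma mul_inv_conj {M : Type u} [CommGroup M] (p q : M) : p * q * p⁻¹ = q := by
  rw [mul_comm p q, mul_assoc, mul_inv_cancel, mul_one]

/-- the key computation: `Φ` is given on all conjugates of `L` by the expected formula. -/
lemma Phi_conj (hbij : Function.Bijective
      (Monoid.CoprodI.lift fun t : T => inclusion (conj_le_normalClosure L (t : G))))
    (hψ : ∀ a b : L, ψ (a * b) = ψ a + ψ b)
    (hT : ∀ g : G, ∃! t : T, (t : G)⁻¹ * g ∈ L ⊔ Subgroup.normalClosure (L : Set G))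
    (x : G) (l : L) :
    Phi L W T ψ hbij hψ ⟨x * l * x⁻¹, conj_mem' L (L_le_N L l.2) x⟩ =
      Multiplicative.ofAdd (W.ρ (QuotientGroup.mk x) (ψ l)) := by
  obtain ⟨t, ht, -⟩ := hT x
  rw [sup_eq] at ht
  set n1 : G := (t : G)⁻¹ * x with hn1
  have hx : x = (t : G) * n1 := by rw [hn1]; group
  have hmk : (QuotientGroup.mk x : G ⧸ Subgroup.normalClosure (L : Set G))
      = QuotientGroup.mk (t : G) := by
    rw [hx, QuotientGroup.mk_mul, mk_eq_one L ht, mul_one]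
  have key : (⟨x * l * x⁻¹, conj_mem' L (L_le_N L l.2) x⟩ :
        ↥(Subgroup.normalClosure (L : Set G)))
      = ⟨(t : G) * n1 * (t : G)⁻¹, conj_mem' L ht (t : G)⟩ *
        ⟨(t : G) * l * (t : G)⁻¹, mem_tlt L (t : G) l⟩ *
        (⟨(t : G) * n1 * (t : G)⁻¹, conj_mem' L ht (t : G)⟩)⁻¹ := by
    apply Subtype.ext
    show x * l * x⁻¹ = ((t : G) * n1 * (t : G)⁻¹) * ((t : G) * l * (t : G)⁻¹) *
      ((t : G) * n1 * (t : G)⁻¹)⁻¹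
    rw [hx]; group
  rw [key, map_mul, map_mul, map_inv, mul_inv_conj, Phi_of, hmk]

/-- `Φ` is `G`-equivariant. -/
lemma Phi_equiv (hbij : Function.Bijective
      (Monoid.CoprodI.lift fun t : T => inclusion (conj_le_normalClosure L (t : G))))
    (hψ : ∀ a b : L, ψ (a * b) = ψ a + ψ b)
    (hT : ∀ g : G, ∃! t : T, (t : G)⁻¹ * g ∈ L ⊔ Subgroup.normalClosure (L : Set G))
    (g : G) (n : ↥(Subgroup.normalClosure (L : Set G))) :
    Phi L W T ψ hbij hψ ⟨g * n * g⁻¹, conj_mem' L n.2 g⟩ =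
      Multiplicative.ofAdd (W.ρ (QuotientGroup.mk g)
        (Multiplicative.toAdd (Phi L W T ψ hbij hψ n))) := by
  let C : ↥(Subgroup.normalClosure (L : Set G)) →*
      ↥(Subgroup.normalClosure (L : Set G)) :=
    MonoidHom.mk' (fun n => ⟨g * n * g⁻¹, conj_mem' L n.2 g⟩)
      (fun a b => Subtype.ext (by
        show g * (↑a * ↑b) * g⁻¹ = (g * ↑a * g⁻¹) * (g * ↑b * g⁻¹)
        group))
  let Rg : Multiplicative W →* Multiplicative W :=
    AddMonoidHom.toMultiplicative ((W.ρ (QuotientGroup.mk g)).toAddMonoidHom)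
  have hkey : (Phi L W T ψ hbij hψ).comp C = Rg.comp (Phi L W T ψ hbij hψ) := by
    apply homExtN L T hbij
    intro t l
    show Phi L W T ψ hbij hψ ⟨g * ((t : G) * l * (t : G)⁻¹) * g⁻¹, _⟩ = _
    have h1 : (⟨g * ((t : G) * l * (t : G)⁻¹) * g⁻¹, conj_mem' L (mem_tlt L (t : G) l) g⟩ :
          ↥(Subgroup.normalClosure (L : Set G)))
        = ⟨(g * (t : G)) * l * (g * (t : G))⁻¹, conj_mem' L (L_le_N L l.2) (g * (t : G))⟩ :=
      Subtype.ext (by group)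
    rw [h1, Phi_conj L W T ψ hbij hψ hT, MonoidHom.comp_apply,
      Phi_of L W T ψ hbij hψ, QuotientGroup.mk_mul, map_mul]
    rfl
  exact DFunLike.congr_fun hkey n

end CLAux2

namespace CLAux3

open CLAux CLAux2 Monoid groupCohomology

variable {G : Type u} [Group G] (L : Subgroup G) {R : Type u} [CommRing R]
  (W : Rep R (G ⧸ Subgroup.normalClosure (L : Set G))) (T : Set G)
  (ψ : L → W)

/-- a set-theoretic section of the quotient map. -/
noncomputable def sec (q : G ⧸ Subgroup.normalClosure (L : Set G)) : G := Quotient.out q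

lemma mk_sec (q : G ⧸ Subgroup.normalClosure (L : Set G)) :
    (QuotientGroup.mk (sec L q) : G ⧸ Subgroup.normalClosure (L : Set G)) = q :=
  QuotientGroup.out_eq' q

/-- the factor set of the extension. -/
noncomputable def fs (a b : G ⧸ Subgroup.normalClosure (L : Set G)) : G :=
  sec L a * sec L b * (sec L (a * b))⁻¹

lemma fs_mem (a b : G ⧸ Subgroup.normalClosure (L : Set G)) :
    fs L a b ∈ Subgroup.normalClosure (L : Set G) := by
  rw [← QuotientGroup.eq_one_iff]
  show (QuotientGroup.mk (sec L a * sec L b * (sec L (a * b))⁻¹) :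
    G ⧸ Subgroup.normalClosure (L : Set G)) = 1
  rw [QuotientGroup.mk_mul, QuotientGroup.mk_mul, QuotientGroup.mk_inv,
    mk_sec, mk_sec, mk_sec, mul_inv_cancel]

variable (hbij : Function.Bijective
      (Monoid.CoprodI.lift fun t : T => inclusion (conj_le_normalClosure L (t : G))))

/-- the transgression 2-cocycle. -/
noncomputable def sigma (hψ : ∀ a b : L, ψ (a * b) = ψ a + ψ b) :
    (G ⧸ Subgroup.normalClosure (L : Set G)) × (G ⧸ Subgroup.normalClosure (L : Set G)) → W :=
  fun p => Multiplicative.toAdd (Phi L W T ψ hbij hψ ⟨fs L p.1 p.2, fs_mem L p.1 p.2⟩)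

lemma sigma_mem_twoCocycles (hψ : ∀ a b : L, ψ (a * b) = ψ a + ψ b)
    (hT : ∀ g : G, ∃! t : T, (t : G)⁻¹ * g ∈ L ⊔ Subgroup.normalClosure (L : Set G)) :
    sigma L W T ψ hbij hψ ∈ cocycles₂ W := by
  rw [mem_cocycles₂_iff]
  intro a b c
  have hgrp : (⟨fs L a b, fs_mem L a b⟩ * ⟨fs L (a * b) c, fs_mem L (a * b) c⟩ :
        ↥(Subgroup.normalClosure (L : Set G)))
      = ⟨sec L a * fs L b c * (sec L a)⁻¹, conj_mem' L (fs_mem L b c) (sec L a)⟩ *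
        ⟨fs L a (b * c), fs_mem L a (b * c)⟩ := by
    apply Subtype.ext
    show fs L a b * fs L (a * b) c
      = (sec L a * fs L b c * (sec L a)⁻¹) * fs L a (b * c)
    rw [fs, fs, fs, fs, ← mul_assoc a b c]
    group
  have happ := congrArg (Phi L W T ψ hbij hψ) hgrp
  rw [map_mul, map_mul] at happ
  have hmid : Phi L W T ψ hbij hψ
      ⟨sec L a * fs L b c * (sec L a)⁻¹, conj_mem' L (fs_mem L b c) (sec L a)⟩
      = Multiplicative.ofAdd (W.ρ a (sigma L W T ψ hbij hψ (b, c))) := by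
    have := Phi_equiv L W T ψ hbij hψ hT (sec L a) ⟨fs L b c, fs_mem L b c⟩
    rw [mk_sec] at this
    exact this
  rw [hmid] at happ
  have := congrArg Multiplicative.toAdd happ
  simp only [toAdd_mul, toAdd_ofAdd] at this
  show sigma L W T ψ hbij hψ (a * b, c) + sigma L W T ψ hbij hψ (a, b)
      = W.ρ a (sigma L W T ψ hbij hψ (b, c)) + sigma L W T ψ hbij hψ (a, b * c)
  rw [add_comm]
  exact this

end CLAux3

namespace CLAux4

open CLAux CLAux2 CLAux3 Monoid groupCohomology

variable {G : Type u} [Group G] (L : Subgroup G) {R : Type u} [CommRing R]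
  (W : Rep R (G ⧸ Subgroup.normalClosure (L : Set G))) (T : Set G)
  (ψ ψ' : L → W)
  (hbij : Function.Bijective
      (Monoid.CoprodI.lift fun t : T => inclusion (conj_le_normalClosure L (t : G))))

lemma Phi_add_apply (hψ : ∀ a b : L, ψ (a * b) = ψ a + ψ b)
    (hψ' : ∀ a b : L, ψ' (a * b) = ψ' a + ψ' b)
    (hsum : ∀ a b : L, (ψ + ψ') (a * b) = (ψ + ψ') a + (ψ + ψ') b)
    (n : ↥(Subgroup.normalClosure (L : Set G))) :
    Multiplicative.toAdd (Phi L W T (ψ + ψ') hbij hsum n)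
      = Multiplicative.toAdd (Phi L W T ψ hbij hψ n)
        + Multiplicative.toAdd (Phi L W T ψ' hbij hψ' n) := by
  have : Phi L W T (ψ + ψ') hbij hsum
      = (Phi L W T ψ hbij hψ) * (Phi L W T ψ' hbij hψ') := by
    apply homExtN L T hbij
    intro t l
    rw [Phi_of, MonoidHom.mul_apply, Phi_of, Phi_of]
    show Multiplicative.ofAdd (W.ρ (QuotientGroup.mk (t : G)) (ψ l + ψ' l)) = _
    rw [map_add]
    rfl
  rw [this]
  rfl

lemma Phi_smul_apply (r : R) (hψ : ∀ a b : L, ψ (a * b) = ψ a + ψ b)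
    (hsmul : ∀ a b : L, (r • ψ) (a * b) = (r • ψ) a + (r • ψ) b)
    (n : ↥(Subgroup.normalClosure (L : Set G))) :
    Multiplicative.toAdd (Phi L W T (r • ψ) hbij hsmul n)
      = r • Multiplicative.toAdd (Phi L W T ψ hbij hψ n) := by
  let S : Multiplicative W →* Multiplicative W :=
    AddMonoidHom.toMultiplicative ((r • (LinearMap.id : W →ₗ[R] W)).toAddMonoidHom)
  have : Phi L W T (r • ψ) hbij hsmul = S.comp (Phi L W T ψ hbij hψ) := by
    apply homExtN L T hbij
    intro t l
    rw [Phi_of, MonoidHom.comp_apply, Phi_of]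
    show Multiplicative.ofAdd (W.ρ (QuotientGroup.mk (t : G)) (r • ψ l)) = _
    rw [map_smul]
    rfl
  rw [this]
  rfl

lemma sigma_add (hψ : ∀ a b : L, ψ (a * b) = ψ a + ψ b)
    (hψ' : ∀ a b : L, ψ' (a * b) = ψ' a + ψ' b)
    (hsum : ∀ a b : L, (ψ + ψ') (a * b) = (ψ + ψ') a + (ψ + ψ') b) :
    sigma L W T (ψ + ψ') hbij hsum
      = sigma L W T ψ hbij hψ + sigma L W T ψ' hbij hψ' := by
  funext p
  exact Phi_add_apply L W T ψ ψ' hbij hψ hψ' hsum _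

lemma sigma_smul (r : R) (hψ : ∀ a b : L, ψ (a * b) = ψ a + ψ b)
    (hsmul : ∀ a b : L, (r • ψ) (a * b) = (r • ψ) a + (r • ψ) b) :
    sigma L W T (r • ψ) hbij hsmul = r • sigma L W T ψ hbij hψ := by
  funext p
  exact Phi_smul_apply L W T ψ hbij r hψ hsmul _

end CLAux4

namespace CLMain

open CLAux CLAux2 CLAux3 CLAux4 groupCohomology

lemma psiAdd (f : cocycles₁ (repOfQuotientRes Λ k V)) (a b : Λ) :
    (f (a * b) : V) = (f a : V) + (f b : V) := by
  have h := (mem_cocycles₁_iff (f : Λ → repOfQuotientRes Λ k V)).1 f.2 a b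
  have h2 : (repOfQuotientRes Λ k V).ρ a (f b) = (f b : V) := by
    show V.ρ (QuotientGroup.mk (a : Γ)) (f b) = (f b : V)
    rw [mk_eq_one Λ (L_le_N Λ a.2), map_one]
    rfl
  rw [h, h2, add_comm]

instance : (repOfQuotientRes Λ k V).IsTrivial := by
  constructor
  intro g
  ext x
  show V.ρ (QuotientGroup.mk (g : Γ)) x = x
  rw [mk_eq_one Λ (L_le_N Λ g.2), map_one]
  rfl

lemma sigma_congr {G : Type u} [Group G] (L : Subgroup G) {R : Type u} [CommRing R]
    (W : Rep R (G ⧸ Subgroup.normalClosure (L : Set G))) (T : Set G)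
    {ψ1 ψ2 : L → W}
    (hbij : Function.Bijective
      (Monoid.CoprodI.lift fun t : T => inclusion (conj_le_normalClosure L (t : G))))
    (h : ψ1 = ψ2) (h1 : ∀ a b : L, ψ1 (a * b) = ψ1 a + ψ1 b)
    (h2 : ∀ a b : L, ψ2 (a * b) = ψ2 a + ψ2 b) :
    sigma L W T ψ1 hbij h1 = sigma L W T ψ2 hbij h2 := by
  subst h; rfl

variable (T : Set Γ)
  (hbij : Function.Bijective
      (Monoid.CoprodI.lift fun t : T => inclusion (conj_le_normalClosure Λ (t : Γ))))
  (hT : ∀ g : Γ, ∃! t : T, (t : Γ)⁻¹ * g ∈ Λ ⊔ Subgroup.normalClosure (Λ : Set Γ))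

/-- the transgression, on cocycle level. -/
noncomputable def deltaHat
    (hbij : Function.Bijective
      (Monoid.CoprodI.lift fun t : T => inclusion (conj_le_normalClosure Λ (t : Γ))))
    (hT : ∀ g : Γ, ∃! t : T, (t : Γ)⁻¹ * g ∈ Λ ⊔ Subgroup.normalClosure (Λ : Set Γ)) :
    cocycles₁ (repOfQuotientRes Λ k V) →ₗ[k] groupCohomology.H2 V where
  toFun f := (H2π V).hom
    ⟨sigma Λ V T (fun a => (f a : V)) hbij (psiAdd Λ k V f),
     sigma_mem_twoCocycles Λ V T _ hbij (psiAdd Λ k V f) hT⟩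
  map_add' f g := by
    dsimp only
    rw [← map_add]
    congr 1
    apply Subtype.ext
    show sigma Λ V T _ hbij _ = sigma Λ V T (fun a => (f a : V)) hbij _
      + sigma Λ V T (fun a => (g a : V)) hbij _
    rw [sigma_congr Λ V T hbij
      (show (fun a => ((f + g) a : V)) = (fun a => (f a : V)) + (fun a => (g a : V)) from
        funext fun a => rfl)
      (psiAdd Λ k V (f + g))
      (fun a b => by
        show (f (a*b) : V) + g (a*b) = ((f a : V) + g a) + ((f b : V) + g b)
        rw [psiAdd Λ k V f, psiAdd Λ k V g]; abel)]
    exact sigma_add Λ V T _ _ hbij _ _ _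
  map_smul' r f := by
    dsimp only
    rw [RingHom.id_apply, ← map_smul]
    congr 1
    apply Subtype.ext
    show sigma Λ V T _ hbij _ = r • sigma Λ V T (fun a => (f a : V)) hbij _
    rw [sigma_congr Λ V T hbij
      (show (fun a => ((r • f) a : V)) = r • (fun a => (f a : V)) from
        funext fun a => rfl)
      (psiAdd Λ k V (r • f))
      (fun a b => by
        show r • (f (a*b) : V) = r • (f a : V) + r • (f b : V)
        rw [psiAdd Λ k V f, smul_add])]
    exact sigma_smul Λ V T _ hbij r _ _

end CLMain

namespace CLMain

open CLAux CLAux2 CLAux3 CLAux4 groupCohomology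

lemma memFF (g : Γ) :
    g * (sec Λ (QuotientGroup.mk g))⁻¹ ∈ Subgroup.normalClosure (Λ : Set Γ) := by
  rw [← QuotientGroup.eq_one_iff]
  show (QuotientGroup.mk (g * (sec Λ (QuotientGroup.mk g))⁻¹) :
    Γ ⧸ Subgroup.normalClosure (Λ : Set Γ)) = 1
  rw [QuotientGroup.mk_mul, QuotientGroup.mk_inv, mk_sec, mul_inv_cancel]

lemma deltaHat_ker (T : Set Γ)
    (hbij : Function.Bijective
      (Monoid.CoprodI.lift fun t : T => inclusion (conj_le_normalClosure Λ (t : Γ))))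
    (hT : ∀ g : Γ, ∃! t : T, (t : Γ)⁻¹ * g ∈ Λ ⊔ Subgroup.normalClosure (Λ : Set Γ))
    (hH1 : Subsingleton (groupCohomology.H1 (repOfQuotient Λ k V)))
    (f : cocycles₁ (repOfQuotientRes Λ k V))
    (h0 : deltaHat Λ k V T hbij hT f = 0) : f = 0 := by
  set ψ : Λ → V := fun a => (f a : V) with hψdef
  have hψ : ∀ a b : Λ, ψ (a * b) = ψ a + ψ b := psiAdd Λ k V f
  -- extract the cochain `u` bounding `σ`
  have h0' : ⇑(⟨sigma Λ V T ψ hbij hψ, sigma_mem_twoCocycles Λ V T ψ hbij hψ hT⟩ :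
      cocycles₂ V) ∈ coboundaries₂ V := by
    exact (H2π_eq_zero_iff (⟨sigma Λ V T ψ hbij hψ, sigma_mem_twoCocycles Λ V T ψ hbij hψ hT⟩ :
      cocycles₂ V)).1 h0
  obtain ⟨u, hu⟩ := h0'
  have huv : (d₁₂ V).hom u = sigma Λ V T ψ hbij hψ := hu
  -- the 1-cochain `FF` on `Γ`
  set FF : Γ → V := fun g =>
    Multiplicative.toAdd (Phi Λ V T ψ hbij hψ
      ⟨g * (sec Λ (QuotientGroup.mk g))⁻¹, memFF Λ g⟩) + u (QuotientGroup.mk g)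
    with hFFdef
  have hFF : FF ∈ cocycles₁ (repOfQuotient Λ k V) := by
    refine (mem_cocycles₁_iff (A := repOfQuotient Λ k V) FF).2 ?_
    intro g h
    have hgrp : (⟨g * h * (sec Λ (QuotientGroup.mk (g * h)))⁻¹, memFF Λ (g * h)⟩ :
          ↥(Subgroup.normalClosure (Λ : Set Γ)))
        = ⟨g * (sec Λ (QuotientGroup.mk g))⁻¹, memFF Λ g⟩ *
          ⟨sec Λ (QuotientGroup.mk g) * (h * (sec Λ (QuotientGroup.mk h))⁻¹) *
              (sec Λ (QuotientGroup.mk g))⁻¹,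
            conj_mem' Λ (memFF Λ h) _⟩ *
          ⟨fs Λ (QuotientGroup.mk g) (QuotientGroup.mk h),
            fs_mem Λ (QuotientGroup.mk g) (QuotientGroup.mk h)⟩ := by
      apply Subtype.ext
      show g * h * (sec Λ (QuotientGroup.mk (g * h)))⁻¹ = _
      rw [QuotientGroup.mk_mul]
      show _ = (g * (sec Λ (QuotientGroup.mk g))⁻¹) *
        (sec Λ (QuotientGroup.mk g) * (h * (sec Λ (QuotientGroup.mk h))⁻¹) *
          (sec Λ (QuotientGroup.mk g))⁻¹) *
        (sec Λ (QuotientGroup.mk g) * sec Λ (QuotientGroup.mk h) *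
          (sec Λ (QuotientGroup.mk g * QuotientGroup.mk h))⁻¹)
      group
    have hmid0 := Phi_equiv Λ V T ψ hbij hψ hT (sec Λ (QuotientGroup.mk g))
      ⟨h * (sec Λ (QuotientGroup.mk h))⁻¹, memFF Λ h⟩
    rw [mk_sec] at hmid0
    have hmid : Phi Λ V T ψ hbij hψ
        ⟨sec Λ (QuotientGroup.mk g) * (h * (sec Λ (QuotientGroup.mk h))⁻¹) *
            (sec Λ (QuotientGroup.mk g))⁻¹,
          conj_mem' Λ (memFF Λ h) _⟩
        = Multiplicative.ofAdd (V.ρ (QuotientGroup.mk g)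
            (Multiplicative.toAdd (Phi Λ V T ψ hbij hψ
              ⟨h * (sec Λ (QuotientGroup.mk h))⁻¹, memFF Λ h⟩))) := hmid0
    have hσ : sigma Λ V T ψ hbij hψ (QuotientGroup.mk g, QuotientGroup.mk h)
        = V.ρ (QuotientGroup.mk g) (u (QuotientGroup.mk h))
          - u (QuotientGroup.mk g * QuotientGroup.mk h) + u (QuotientGroup.mk g) := by
      rw [← huv]
      rfl
    have happ := congrArg (fun z => Multiplicative.toAdd (Phi Λ V T ψ hbij hψ z)) hgrp
    rw [map_mul (Phi Λ V T ψ hbij hψ), map_mul (Phi Λ V T ψ hbij hψ), hmid,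
      toAdd_mul, toAdd_mul, toAdd_ofAdd] at happ
    have hfs : Multiplicative.toAdd (Phi Λ V T ψ hbij hψ
        ⟨fs Λ (QuotientGroup.mk g) (QuotientGroup.mk h),
          fs_mem Λ (QuotientGroup.mk g) (QuotientGroup.mk h)⟩)
        = sigma Λ V T ψ hbij hψ (QuotientGroup.mk g, QuotientGroup.mk h) := rfl
    rw [hfs, hσ] at happ
    show FF (g * h) = V.ρ (QuotientGroup.mk g) (FF h) + FF g
    rw [hFFdef]
    dsimp only
    rw [happ, QuotientGroup.mk_mul, map_add]
    abel
  -- `FF` is a coboundary since `H¹(Γ; V) = 0`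
  have hcls : (H1π (repOfQuotient Λ k V)).hom ⟨FF, hFF⟩ = 0 := Subsingleton.elim _ _
  rw [H1π_eq_zero_iff] at hcls
  obtain ⟨v, hv⟩ := hcls
  have hvv : (d₀₁ (repOfQuotient Λ k V)).hom v = FF := hv
  have hFFa : ∀ a : Λ, FF (a : Γ) = 0 := by
    intro a
    have h4 : (repOfQuotient Λ k V).ρ ((a : Γ)) v = v := by
      show V.ρ (QuotientGroup.mk ((a : Γ))) v = v
      rw [mk_eq_one Λ (L_le_N Λ a.2), map_one]
      rfl
    rw [← hvv]
    show (repOfQuotient Λ k V).ρ ((a : Γ)) v - v = 0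
    rw [h4, sub_self]
  have hsec1 : sec Λ (1 : Γ ⧸ Subgroup.normalClosure (Λ : Set Γ))
      ∈ Subgroup.normalClosure (Λ : Set Γ) :=
    (QuotientGroup.eq_one_iff _).1 (mk_sec Λ 1)
  have hval : ∀ a : Λ, (0 : V) = ψ a
      + -Multiplicative.toAdd (Phi Λ V T ψ hbij hψ ⟨sec Λ 1, hsec1⟩) + u 1 := by
    intro a
    have hmka : (QuotientGroup.mk ((a : Γ)) :
        Γ ⧸ Subgroup.normalClosure (Λ : Set Γ)) = 1 := mk_eq_one Λ (L_le_N Λ a.2)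
    have helt : (⟨(a : Γ) * (sec Λ (QuotientGroup.mk ((a : Γ))))⁻¹, memFF Λ (a : Γ)⟩ :
          ↥(Subgroup.normalClosure (Λ : Set Γ)))
        = ⟨(1 : Γ) * a * (1 : Γ)⁻¹, conj_mem' Λ (L_le_N Λ a.2) 1⟩ *
          (⟨sec Λ 1, hsec1⟩)⁻¹ := by
      apply Subtype.ext
      show (a : Γ) * (sec Λ (QuotientGroup.mk ((a : Γ))))⁻¹
        = ((1 : Γ) * a * (1 : Γ)⁻¹) * (sec Λ 1)⁻¹
      rw [hmka]
      group
    have h1 := hFFa a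
    rw [hFFdef] at h1
    dsimp only at h1
    rw [helt, map_mul, map_inv, toAdd_mul, toAdd_inv,
      Phi_conj Λ V T ψ hbij hψ hT 1 a, QuotientGroup.mk_one, map_one, hmka] at h1
    simp only [toAdd_ofAdd, Module.End.one_apply] at h1
    exact h1.symm
  have hC : Multiplicative.toAdd (Phi Λ V T ψ hbij hψ ⟨sec Λ 1, hsec1⟩) = u 1 := by
    have h1 := (hval 1).symm
    rw [psi_one Λ V ψ hψ, zero_add] at h1
    exact neg_add_eq_zero.1 h1
  have hzero : ∀ a : Λ, ψ a = 0 := by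
    intro a
    have := (hval a).symm
    rw [hC] at this
    simpa using this
  apply Subtype.ext
  funext a
  exact hzero a

end CLMain

/-- If `(Γ, Λ, Λ)` is a Cohen–Lyndon triple, `V` is a representation of `Γ̄ = Γ ⧸ ⟪Λ⟫`, and
`H¹(Γ; V) = 0`, then `H¹(Λ; V)` embeds `k`-linearly into `H²(Γ̄; V)`. -/
theorem exists_injective_map_of_isCohenLyndonTriple (hCL : IsCohenLyndonTriple Λ)
    (hH1 : Subsingleton (groupCohomology.H1 (repOfQuotient Λ k V))) :
    ∃ δ : groupCohomology.H1 (repOfQuotientRes Λ k V) →ₗ[k] groupCohomology.H2 V,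
      Function.Injective δ := by
  obtain ⟨T, hT, hbij⟩ := hCL
  have hker : LinearMap.ker (CLMain.deltaHat Λ k V T hbij hT) = ⊥ := by
    rw [eq_bot_iff]
    intro f hf
    rw [Submodule.mem_bot]
    exact CLMain.deltaHat_ker Λ k V T hbij hT hH1 f (LinearMap.mem_ker.1 hf)
  refine ⟨(CLMain.deltaHat Λ k V T hbij hT).comp
      ((groupCohomology.cocycles₁IsoOfIsTrivial (repOfQuotientRes Λ k V)).inv.hom.comp
        (groupCohomology.H1IsoOfIsTrivial (repOfQuotientRes Λ k V)).hom.hom), ?_⟩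
  intro x y hxy
  have h1 := LinearMap.ker_eq_bot.1 hker hxy
  have h2 := congrArg
    (groupCohomology.cocycles₁IsoOfIsTrivial (repOfQuotientRes Λ k V)).hom.hom h1
  have h3 := congrArg (groupCohomology.H1IsoOfIsTrivial (repOfQuotientRes Λ k V)).inv.hom h2
  simpa using h3
end

section
/- Let Γ be a group and Λ an infinite cyclic subgroup of Γ such that (Γ, Λ, Λ) is a Cohen–Lyndon triple. Let k be a commutative ring and V a nonzero k-linear representation of Γ̄ := Γ/⟪Λ⟫, regarded as a representation of Γ via the quotient map π. If H^1(Γ; V) = 0, then H^2(Γ̄; V) ≠ 0. -/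
open Subgroup

universe u

variable {Γ : Type u} [Group Γ] (Λ : Subgroup Γ) (k : Type u) [CommRing k]
  (V : Rep k (Γ ⧸ Subgroup.normalClosure (Λ : Set Γ)))

theorem exists_phi (hCL : IsCohenLyndonTriple Λ)
    (hcyc : ∃ x : Γ, Subgroup.zpowers x = Λ) (hinf : Infinite ↥Λ) (v : V) :
    ∃ Φ : Γ → V,
      (∀ a b, a ∈ Subgroup.normalClosure (Λ : Set Γ) → b ∈ Subgroup.normalClosure (Λ : Set Γ) →
        Φ (a * b) = Φ a + Φ b) ∧
      (∀ g n, n ∈ Subgroup.normalClosure (Λ : Set Γ) →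
        Φ (g * n * g⁻¹) = V.ρ (QuotientGroup.mk g) (Φ n)) ∧
      ∃ y, y ∈ Subgroup.normalClosure (Λ : Set Γ) ∧ Φ y = v := by
  classical
  obtain ⟨T, htrans, hbij⟩ := hCL
  obtain ⟨x, hx⟩ := hcyc
  set N := Subgroup.normalClosure (Λ : Set Γ) with hN
  have hΛN : Λ ≤ N := Subgroup.le_normalClosure
  have hsup : Λ ⊔ N = N := sup_eq_right.mpr hΛN
  -- x has infinite order
  have hxord : ¬ IsOfFinOrder x := by
    rw [← infinite_zpowers]
    rw [hx]
    exact Set.infinite_coe_iff.mp hinf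
  -- the generator as an element of Λ
  have hxΛ : x ∈ Λ := hx ▸ mem_zpowers x
  set x' : ↥Λ := ⟨x, hxΛ⟩ with hx'
  -- iso Λ ≃* Multiplicative ℤ
  set ξ : Multiplicative ℤ →* ↥Λ := zpowersHom (↥Λ) x' with hξdef
  have hξbij : Function.Bijective ξ := by
    constructor
    · intro a b hab
      have : x ^ (Multiplicative.toAdd a) = x ^ (Multiplicative.toAdd b) := by
        have := congrArg (Subtype.val) hab
        simpa [hξdef, zpowersHom_apply, hx'] using this
      have := (injective_zpow_iff_not_isOfFinOrder.mpr hxord) this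
      exact Multiplicative.toAdd.injective this
    · rintro ⟨g, hg⟩
      rw [← hx] at hg
      obtain ⟨m, hm⟩ := mem_zpowers_iff.mp hg
      exact ⟨Multiplicative.ofAdd m, Subtype.ext (by simpa [hξdef, zpowersHom_apply, hx'] using hm)⟩
  set ℓ : ↥Λ ≃* Multiplicative ℤ := (MulEquiv.ofBijective ξ hξbij).symm with hℓdef
  have hℓx : ℓ x' = Multiplicative.ofAdd (1 : ℤ) := by
    rw [hℓdef, MulEquiv.symm_apply_eq, MulEquiv.ofBijective_apply, hξdef, zpowersHom_apply]
    simp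
  -- homs from the free factors
  set f : ∀ t : T, ↥(Λ.map (MulAut.conj (t : Γ)).toMonoidHom) →* Multiplicative V :=
    fun t =>
      (AddMonoidHom.toMultiplicative
        ((V.ρ (QuotientGroup.mk (s := N) (t : Γ))).toAddMonoidHom.comp (zmultiplesHom V v))).comp
      ((ℓ : ↥Λ →* Multiplicative ℤ).comp
        ((Subgroup.equivMapOfInjective Λ (MulAut.conj (t : Γ)).toMonoidHom
          (MulAut.conj (t : Γ)).injective).symm : _ →* ↥Λ)) with hfdef
  set e := Monoid.CoprodI.lift fun t : T => inclusion (conj_le_normalClosure Λ (t : Γ)) with hedef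
  set ψ : ↥N ≃* _ := (MulEquiv.ofBijective e hbij).symm with hψdef
  set φ : ↥N →* Multiplicative V := (Monoid.CoprodI.lift f).comp ψ.toMonoidHom with hφdef
  have hval : ∀ (t : T) (lam : Γ) (hlam : lam ∈ Λ)
      (hmem : (t : Γ) * lam * (t : Γ)⁻¹ ∈ N),
      φ ⟨(t : Γ) * lam * (t : Γ)⁻¹, hmem⟩ =
        Multiplicative.ofAdd
          (V.ρ (QuotientGroup.mk (s := N) (t : Γ))
            ((Multiplicative.toAdd (ℓ ⟨lam, hlam⟩)) • v)) := by
    intro t lam hlam hmem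
    set y : ↥(Λ.map (MulAut.conj (t : Γ)).toMonoidHom) :=
      ⟨(t : Γ) * lam * (t : Γ)⁻¹, ⟨lam, hlam, by simp [MulAut.conj_apply]⟩⟩ with hy
    have he : e (Monoid.CoprodI.of (M := fun t : T => ↥(Λ.map (MulAut.conj (t : Γ)).toMonoidHom)) y) = ⟨(t : Γ) * lam * (t : Γ)⁻¹, hmem⟩ := by
      rw [hedef, Monoid.CoprodI.lift_of]
      rfl
    have hψy : ψ ⟨(t : Γ) * lam * (t : Γ)⁻¹, hmem⟩ = Monoid.CoprodI.of (M := fun t : T => ↥(Λ.map (MulAut.conj (t : Γ)).toMonoidHom)) y := by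
      rw [hψdef, MulEquiv.symm_apply_eq, MulEquiv.ofBijective_apply, he]
    have hσ : (Subgroup.equivMapOfInjective Λ (MulAut.conj (t : Γ)).toMonoidHom
        (MulAut.conj (t : Γ)).injective).symm y = ⟨lam, hlam⟩ := by
      rw [MulEquiv.symm_apply_eq]
      exact Subtype.ext (by simp [Subgroup.coe_equivMapOfInjective_apply, MulAut.conj_apply]; rfl)
    rw [hφdef, MonoidHom.comp_apply]
    show Monoid.CoprodI.lift f (ψ _) = _
    rw [hψy, Monoid.CoprodI.lift_of, hfdef]
    simp only [MonoidHom.comp_apply]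
    rw [show ((Subgroup.equivMapOfInjective Λ (MulAut.conj (t : Γ)).toMonoidHom
      (MulAut.conj (t : Γ)).injective).symm : _ →* ↥Λ) y = ⟨lam, hlam⟩ from hσ]
    rfl
  have hNnormal : N.Normal := Subgroup.normalClosure_normal
  have hφconjN : ∀ a b : ↥N, φ (a * b * a⁻¹) = φ b := by
    intro a b
    rw [map_mul, map_mul, map_inv, mul_comm (φ a) (φ b), mul_inv_cancel_right]
  have hconj : ∀ (g : Γ) (n : ↥N) (hmem : g * (n : Γ) * g⁻¹ ∈ N),
      φ ⟨g * (n : Γ) * g⁻¹, hmem⟩ =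
        Multiplicative.ofAdd (V.ρ (QuotientGroup.mk (s := N) g) (Multiplicative.toAdd (φ n))) := by
    intro g n hmem
    set c₁ : ↥N →* ↥N :=
      MonoidHom.codRestrict ((MulAut.conj g).toMonoidHom.comp N.subtype) N
        (fun m => hNnormal.conj_mem (m : Γ) m.2 g) with hc₁
    set h₁ : ↥N →* Multiplicative V := φ.comp c₁ with hh₁
    set h₂ : ↥N →* Multiplicative V :=
      (AddMonoidHom.toMultiplicative
        (V.ρ (QuotientGroup.mk (s := N) g)).toAddMonoidHom).comp φ with hh₂
    have key : h₁ = h₂ := by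
      have hcomp : h₁.comp e = h₂.comp e := by
        apply Monoid.CoprodI.ext_hom
        intro t
        apply MonoidHom.ext
        rintro ⟨yv, hyv⟩
        obtain ⟨lam, hlam, rfl⟩ := hyv
        simp only [MonoidHom.comp_apply, hedef, Monoid.CoprodI.lift_of]
        obtain ⟨t', ht', -⟩ := htrans (g * (t : Γ))
        rw [hsup] at ht'
        have hmemL : (t : Γ) * lam * (t : Γ)⁻¹ ∈ N := hNnormal.conj_mem _ (hΛN hlam) _
        have hincl : (Subgroup.inclusion (conj_le_normalClosure Λ (t : Γ)))
            (⟨(MulAut.conj (t : Γ)).toMonoidHom lam, ⟨lam, hlam, rfl⟩⟩)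
            = (⟨(t : Γ) * lam * (t : Γ)⁻¹, hmemL⟩ : ↥N) := rfl
        rw [hincl]
        have hmem2 : (t' : Γ) * lam * (t' : Γ)⁻¹ ∈ N := hNnormal.conj_mem _ (hΛN hlam) _
        have hmemA : (t' : Γ) * ((t' : Γ)⁻¹ * (g * (t : Γ))) * (t' : Γ)⁻¹ ∈ N :=
          hNnormal.conj_mem _ ht' _
        have hgL : g * ((t : Γ) * lam * (t : Γ)⁻¹) * g⁻¹ =
            ((t' : Γ) * ((t' : Γ)⁻¹ * (g * (t : Γ))) * (t' : Γ)⁻¹) * ((t' : Γ) * lam * (t' : Γ)⁻¹) *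
              ((t' : Γ) * ((t' : Γ)⁻¹ * (g * (t : Γ))) * (t' : Γ)⁻¹)⁻¹ := by group
        have lhs1 : h₁ (⟨(t : Γ) * lam * (t : Γ)⁻¹, hmemL⟩ : ↥N) =
            φ ⟨g * ((t : Γ) * lam * (t : Γ)⁻¹) * g⁻¹, hNnormal.conj_mem _ hmemL g⟩ := rfl
        have lhs2 : (⟨g * ((t : Γ) * lam * (t : Γ)⁻¹) * g⁻¹, hNnormal.conj_mem _ hmemL g⟩ : ↥N) =
            ⟨_, hmemA⟩ * ⟨_, hmem2⟩ * (⟨_, hmemA⟩ : ↥N)⁻¹ := Subtype.ext hgL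
        rw [lhs1, lhs2, hφconjN, hval t' lam hlam hmem2]
        show _ = (AddMonoidHom.toMultiplicative
            (V.ρ (QuotientGroup.mk (s := N) g)).toAddMonoidHom)
          (φ ⟨(t : Γ) * lam * (t : Γ)⁻¹, hmemL⟩)
        rw [hval t lam hlam hmemL]
        have hmk : (QuotientGroup.mk (s := N) (t' : Γ)) =
            QuotientGroup.mk (s := N) (g * (t : Γ)) := (QuotientGroup.eq (s := N)).mpr ht'
        rw [hmk, QuotientGroup.mk_mul, map_mul]
        rfl
      apply MonoidHom.ext
      intro m
      obtain ⟨w, rfl⟩ := hbij.2 m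
      exact DFunLike.congr_fun hcomp w
    calc φ ⟨g * (n : Γ) * g⁻¹, hmem⟩ = h₁ n := rfl
      _ = h₂ n := by rw [key]
      _ = _ := rfl
  refine ⟨fun g => if h : g ∈ N then Multiplicative.toAdd (φ ⟨g, h⟩) else 0, ?_, ?_, ?_⟩
  · intro a b ha hb
    rw [← hN] at ha hb
    beta_reduce
    rw [dif_pos (mul_mem ha hb), dif_pos ha, dif_pos hb]
    have : (⟨a * b, mul_mem ha hb⟩ : ↥N) = ⟨a, ha⟩ * ⟨b, hb⟩ := rfl
    rw [this, map_mul]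
    rfl
  · intro g n hn
    rw [← hN] at hn
    have hmem : g * n * g⁻¹ ∈ N := hNnormal.conj_mem _ hn _
    beta_reduce
    rw [dif_pos hmem, dif_pos hn, hconj g ⟨n, hn⟩ hmem]
    rfl
  · refine ⟨x, hΛN hxΛ, ?_⟩
    obtain ⟨t₀, ht₀, -⟩ := htrans 1
    rw [hsup] at ht₀
    have ht₀N : (t₀ : Γ) ∈ N := by simpa using (inv_mem ht₀)
    have hmem1 : (t₀ : Γ) * x * (t₀ : Γ)⁻¹ ∈ N := hNnormal.conj_mem _ (hΛN hxΛ) _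
    have hmemx : (t₀ : Γ)⁻¹ * ((t₀ : Γ) * x * (t₀ : Γ)⁻¹) * ((t₀ : Γ)⁻¹)⁻¹ ∈ N :=
      hNnormal.conj_mem _ hmem1 _
    beta_reduce
    rw [dif_pos (hΛN hxΛ)]
    have hxeq : (⟨x, hΛN hxΛ⟩ : ↥N) =
        ⟨(t₀ : Γ)⁻¹ * ((t₀ : Γ) * x * (t₀ : Γ)⁻¹) * ((t₀ : Γ)⁻¹)⁻¹, hmemx⟩ :=
      Subtype.ext (by group)
    rw [hxeq, hconj ((t₀ : Γ)⁻¹) ⟨_, hmem1⟩ hmemx, hval t₀ x hxΛ hmem1]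
    have hmk0 : (QuotientGroup.mk (s := N) (t₀ : Γ)) = 1 :=
      (QuotientGroup.eq_one_iff _).mpr ht₀N
    have hmk0' : (QuotientGroup.mk (s := N) ((t₀ : Γ)⁻¹)) = 1 :=
      (QuotientGroup.eq_one_iff _).mpr (inv_mem ht₀N)
    rw [hmk0, hmk0', show (⟨x, hxΛ⟩ : ↥Λ) = x' from rfl, hℓx]
    simp

/-- If `(Γ, Λ, Λ)` is a Cohen–Lyndon triple with `Λ` infinite cyclic, `V` is a nonzero
representation of `Γ̄ = Γ ⧸ ⟪Λ⟫`, and `H¹(Γ; V) = 0`, then `H²(Γ̄; V) ≠ 0`. -/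
theorem H2_nontrivial_of_isCohenLyndonTriple (hCL : IsCohenLyndonTriple Λ)
    (hcyc : ∃ x : Γ, Subgroup.zpowers x = Λ) (hinf : Infinite ↥Λ)
    (hV : Nontrivial V) (hH1 : Subsingleton (groupCohomology.H1 (repOfQuotient Λ k V))) :
    Nontrivial (groupCohomology.H2 V) := by
  classical
  set N := Subgroup.normalClosure (Λ : Set Γ) with hN
  have hNnormal : N.Normal := Subgroup.normalClosure_normal
  obtain ⟨a, b, hab⟩ := hV
  set v : V := a - b with hv
  have hv0 : v ≠ 0 := sub_ne_zero.mpr hab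
  obtain ⟨Φ, hΦmul, hΦconj, y, hyN, hyv⟩ := exists_phi Λ k V hCL hcyc hinf v
  have hΦone : Φ 1 = 0 := by
    have h := hΦmul 1 1 (one_mem _) (one_mem _)
    rw [mul_one] at h
    exact (left_eq_add.mp h)
  set s : Γ ⧸ N → Γ := fun q => Quotient.out q with hsdef
  have hs : ∀ q : Γ ⧸ N, (QuotientGroup.mk (s q) : Γ ⧸ N) = q := fun q => Quotient.out_eq' q
  have hsmem : ∀ q p : Γ ⧸ N, s q * s p * (s (q * p))⁻¹ ∈ N := by
    intro q p
    rw [← QuotientGroup.eq_one_iff]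
    rw [QuotientGroup.mk_mul, QuotientGroup.mk_mul, QuotientGroup.mk_inv, hs, hs, hs]
    group
  set c : (Γ ⧸ N) × (Γ ⧸ N) → V := fun p => Φ (s p.1 * s p.2 * (s (p.1 * p.2))⁻¹) with hcdef
  have hc : c ∈ groupCohomology.cocycles₂ V := by
    rw [groupCohomology.mem_cocycles₂_iff]
    intro g h j
    have hassoc : g * (h * j) = g * h * j := (mul_assoc g h j).symm
    have hid : (s g * s h * (s (g * h))⁻¹) * (s (g * h) * s j * (s (g * h * j))⁻¹) =
        (s g * (s h * s j * (s (h * j))⁻¹) * (s g)⁻¹) *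
          (s g * s (h * j) * (s (g * (h * j)))⁻¹) := by
      rw [hassoc]; group
    have h1 := hΦmul _ _ (hsmem g h) (hsmem (g * h) j)
    rw [hid] at h1
    have h2 := hΦmul _ _ (hNnormal.conj_mem _ (hsmem h j) (s g)) (hsmem g (h * j))
    have h3 := hΦconj (s g) _ (hsmem h j)
    rw [hs] at h3
    show Φ (s (g * h) * s j * (s (g * h * j))⁻¹) + Φ (s g * s h * (s (g * h))⁻¹) =
        V.ρ g (Φ (s h * s j * (s (h * j))⁻¹)) + Φ (s g * s (h * j) * (s (g * (h * j)))⁻¹)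
    rw [add_comm, ← h1, h2, h3]
  have hncb : c ∉ groupCohomology.coboundaries₂ V := by
    intro hcb
    obtain ⟨β, hβ0⟩ := hcb
    have hβ : ∀ g h : Γ ⧸ N, V.ρ g (β h) - β (g * h) + β g = c (g, h) := by
      intro g h
      have := congrFun hβ0 (g, h)
      rw [groupCohomology.d₁₂_hom_apply] at this
      exact this
    set F : Γ → V := fun g => Φ (g * (s (QuotientGroup.mk g))⁻¹) + β (QuotientGroup.mk g)
      with hFdef
    have hFmem : ∀ g : Γ, g * (s (QuotientGroup.mk g))⁻¹ ∈ N := by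
      intro g
      rw [← QuotientGroup.eq_one_iff, QuotientGroup.mk_mul, QuotientGroup.mk_inv, hs]
      group
    have hFcoc : F ∈ groupCohomology.cocycles₁ (repOfQuotient Λ k V) := by
      apply (groupCohomology.mem_cocycles₁_iff (A := repOfQuotient Λ k V) F).mpr
      intro g h
      have hρ : ∀ (g : Γ) (w : V), (repOfQuotient Λ k V).ρ g w = V.ρ (QuotientGroup.mk g) w :=
        fun _ _ => rfl
      have hmkmul : (QuotientGroup.mk (g * h) : Γ ⧸ N) =
          QuotientGroup.mk g * QuotientGroup.mk h := QuotientGroup.mk_mul ..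
      have hid2 : (g * h) * (s (QuotientGroup.mk g * QuotientGroup.mk h))⁻¹ =
          (g * (s (QuotientGroup.mk g))⁻¹) *
            (s (QuotientGroup.mk g) * (h * (s (QuotientGroup.mk h))⁻¹) *
              (s (QuotientGroup.mk g))⁻¹) *
            (s (QuotientGroup.mk g) * s (QuotientGroup.mk h) *
              (s (QuotientGroup.mk g * QuotientGroup.mk h))⁻¹) := by group
      have m1 : g * (s (QuotientGroup.mk g))⁻¹ ∈ N := hFmem g
      have m2 : s (QuotientGroup.mk g) * (h * (s (QuotientGroup.mk h))⁻¹) *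
          (s (QuotientGroup.mk g))⁻¹ ∈ N := hNnormal.conj_mem _ (hFmem h) _
      have m3 : s (QuotientGroup.mk g) * s (QuotientGroup.mk h) *
          (s (QuotientGroup.mk g * QuotientGroup.mk h))⁻¹ ∈ N := hsmem _ _
      have e1 := hΦmul _ _ (mul_mem m1 m2) m3
      have e2 := hΦmul _ _ m1 m2
      have e3 := hΦconj (s (QuotientGroup.mk g)) _ (hFmem h)
      rw [hs] at e3
      have e4 := hβ (QuotientGroup.mk g) (QuotientGroup.mk h)
      have e5 : c
          (QuotientGroup.mk g, QuotientGroup.mk h) =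
          Φ (s (QuotientGroup.mk g) * s (QuotientGroup.mk h) *
            (s (QuotientGroup.mk g * QuotientGroup.mk h))⁻¹) := rfl
      rw [e5] at e4
      show Φ ((g * h) * (s (QuotientGroup.mk (g * h)))⁻¹) + β (QuotientGroup.mk (g * h)) =
          (V.ρ.comp (QuotientGroup.mk' N)) g
            (Φ (h * (s (QuotientGroup.mk h))⁻¹) + β (QuotientGroup.mk h)) +
          (Φ (g * (s (QuotientGroup.mk g))⁻¹) + β (QuotientGroup.mk g))
      rw [MonoidHom.comp_apply, QuotientGroup.mk'_apply, hmkmul, hid2, e1, e2, e3, ← e4,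
        map_add]
      abel
    have hzero : groupCohomology.H1π (repOfQuotient Λ k V) ⟨F, hFcoc⟩ = 0 :=
      Subsingleton.elim _ _
    have hFcb := (groupCohomology.H1π_eq_zero_iff _).mp hzero
    obtain ⟨w, hw⟩ := hFcb
    have hw' : ∀ gg : Γ, (repOfQuotient Λ k V).ρ gg w - w = F gg := by
      intro gg
      have := congrFun hw gg
      rw [groupCohomology.d₀₁_hom_apply] at this
      exact this
    have hFn : ∀ n, n ∈ N → F n = 0 := by
      intro n hn
      have h1 : (QuotientGroup.mk n : Γ ⧸ N) = 1 := (QuotientGroup.eq_one_iff _).mpr hn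
      have hρn : (repOfQuotient Λ k V).ρ n = 1 := by
        show (V.ρ.comp (QuotientGroup.mk' N)) n = 1
        rw [MonoidHom.comp_apply, QuotientGroup.mk'_apply, h1, map_one]
      rw [← hw' n, hρn]
      simp; rfl
    have hs1 : (s 1)⁻¹ ∈ N := by
      refine inv_mem ?_
      rw [← QuotientGroup.eq_one_iff, hs]
    have hconst : ∀ n, n ∈ N → Φ n + (Φ ((s 1)⁻¹) + β 1) = 0 := by
      intro n hn
      have h0 := hFn n hn
      have hmkn : (QuotientGroup.mk n : Γ ⧸ N) = 1 := (QuotientGroup.eq_one_iff _).mpr hn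
      rw [hFdef] at h0
      beta_reduce at h0
      rw [hmkn, hΦmul n ((s 1)⁻¹) hn hs1] at h0
      rw [← h0]
      abel
    have h1' := hconst 1 (one_mem N)
    rw [hΦone, zero_add] at h1'
    have hyzero := hconst y hyN
    rw [h1', add_zero, hyv] at hyzero
    exact hv0 hyzero
  refine ⟨groupCohomology.H2π V ⟨c, hc⟩, 0,
    fun hcon => hncb ((groupCohomology.H2π_eq_zero_iff _).mp hcon)⟩
end

section
/- Let Γ be a group and S a subgroup of Γ that is simple (S is nontrivial and its only normal subgroups are the trivial subgroup and S itself) and whose normal closure in Γ is all of Γ. Then for every s ∈ S with s ≠ 1, the normal closure of {s} in Γ is all of Γ; that is, every non-identity element of S normally generates Γ. -/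
/-- If `S` is a simple subgroup of `Γ` whose normal closure is all of `Γ`, then every
non-identity element of `S` normally generates `Γ`. -/
theorem normalClosure_singleton_eq_top_of_simple
    {Γ : Type*} [Group Γ] (S : Subgroup Γ) (hS : IsSimpleGroup ↥S)
    (hgen : Subgroup.normalClosure (S : Set Γ) = ⊤) :
    ∀ s ∈ S, s ≠ 1 → Subgroup.normalClosure {s} = ⊤ := by
  intro s hsS hs
  set N := Subgroup.normalClosure ({s} : Set Γ) with hN
  have hNnorm : N.Normal := Subgroup.normalClosure_normal
  have hsN : s ∈ N := Subgroup.subset_normalClosure (Set.mem_singleton s)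
  -- the intersection of N with S, as subgroup of S
  have hKnorm : (N.subgroupOf S).Normal := Subgroup.Normal.subgroupOf hNnorm S
  have hKne : N.subgroupOf S ≠ ⊥ := by
    intro hbot
    have : (⟨s, hsS⟩ : S) ∈ N.subgroupOf S := hsN
    rw [hbot, Subgroup.mem_bot] at this
    exact hs (congrArg Subtype.val this)
  have hKtop : N.subgroupOf S = ⊤ := by
    rcases hS.eq_bot_or_eq_top_of_normal (N.subgroupOf S) hKnorm with h | h
    · exact absurd h hKne
    · exact h
  have hSN : S ≤ N := by
    rw [← Subgroup.subgroupOf_eq_top]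
    exact hKtop
  have : Subgroup.normalClosure (S : Set Γ) ≤ N :=
    Subgroup.normalClosure_le_normal hSN
  rw [hgen] at this
  exact top_le_iff.mp this
end

section
/- For every group C, the free product C ∗ ℤ has no non-trivial finite normal subgroup: every normal subgroup of C ∗ ℤ that is finite (as a set) is the trivial subgroup. -/
open Monoid Monoid.CoprodI

universe u
variable {C : Type u} [Group C]

private abbrev Fac (C : Type u) [Group C] : Bool → Type u
  | true => ULift (Multiplicative ℤ)
  | false => C

private instance : ∀ b, Group (Fac C b)
  | true => inferInstanceAs (Group (ULift (Multiplicative ℤ)))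
  | false => inferInstanceAs (Group C)

private def phiC (C : Type u) [Group C] : Coprod C (Multiplicative ℤ) →* CoprodI (Fac C) :=
  Coprod.lift (CoprodI.of (M := Fac C) (i := false))
    ((CoprodI.of (M := Fac C) (i := true)).comp (MulEquiv.ulift (α := Multiplicative ℤ)).symm.toMonoidHom)

private def psiC (C : Type u) [Group C] : CoprodI (Fac C) →* Coprod C (Multiplicative ℤ) :=
  CoprodI.lift (fun b => match b with
    | true => (Coprod.inr (M := C)).comp (MulEquiv.ulift (α := Multiplicative ℤ)).toMonoidHom
    | false => Coprod.inl)

private lemma psi_phi (x : Coprod C (Multiplicative ℤ)) : psiC C (phiC C x) = x := by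
  have : (psiC C).comp (phiC C) = MonoidHom.id _ := by
    apply Coprod.hom_ext <;> ext x <;>
      simp [phiC, psiC, Coprod.lift_apply_inl, Coprod.lift_apply_inr, CoprodI.lift_of]
  exact DFunLike.congr_fun this x

private lemma phi_psi (x : CoprodI (Fac C)) : phiC C (psiC C x) = x := by
  have : (phiC C).comp (psiC C) = MonoidHom.id _ := by
    apply CoprodI.ext_hom
    rintro (_|_) <;> ext x <;>
      simp [phiC, psiC, Coprod.lift_apply_inl, Coprod.lift_apply_inr, CoprodI.lift_of]
  exact DFunLike.congr_fun this x

private def wprod (L : List (Σ b, Fac C b)) : CoprodI (Fac C) :=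
  (L.map fun l => CoprodI.of l.snd).prod

private lemma front (L : List (Σ b, Fac C b))
    (hchain : L.Chain' (fun l l' => l.fst ≠ l'.fst))
    (hfalse : ∃ l ∈ L, l.fst = false) :
    ∃ (a : ULift (Multiplicative ℤ)) (core : List (Σ b, Fac C b)),
      wprod L = CoprodI.of (M := Fac C) (i := true) a * wprod core
      ∧ core ≠ [] ∧ core.Chain' (fun l l' => l.fst ≠ l'.fst)
      ∧ (∀ l ∈ core, l ∈ L)
      ∧ (∀ h ∈ core.head?, h.fst = false) := by
  match L with
  | [] => simp at hfalse
  | ⟨false, m⟩ :: rest =>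
      exact ⟨1, ⟨false, m⟩ :: rest, by simp [wprod], by simp, hchain, fun l hl => hl,
        by simp⟩
  | ⟨true, m⟩ :: rest =>
      refine ⟨m, rest, by simp [wprod], ?_, hchain.tail, fun l hl => List.mem_cons_of_mem _ hl, ?_⟩
      · rintro rfl
        simp at hfalse
      · intro h hh
        match rest, hh with
        | r :: rest', hh =>
          simp at hh
          subst hh
          have := (List.isChain_cons_cons.mp hchain).1
          simpa using Ne.symm this

private lemma back (L : List (Σ b, Fac C b))
    (hchain : L.Chain' (fun l l' => l.fst ≠ l'.fst))
    (hfalse : ∃ l ∈ L, l.fst = false) :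
    ∃ (b : ULift (Multiplicative ℤ)) (core : List (Σ b, Fac C b)),
      wprod L = wprod core * CoprodI.of (M := Fac C) (i := true) b
      ∧ core ≠ [] ∧ core.Chain' (fun l l' => l.fst ≠ l'.fst)
      ∧ (∀ l ∈ core, l ∈ L)
      ∧ core.head? = L.head?
      ∧ (∀ h ∈ core.getLast?, h.fst = false) := by
  rcases L.eq_nil_or_concat with rfl | ⟨core', l, hL⟩
  · simp at hfalse
  rw [List.concat_eq_append] at hL
  subst hL
  rcases l with ⟨b, m⟩
  cases b with
  | false =>
      refine ⟨1, core' ++ [⟨false, m⟩], by simp [wprod], by simp, hchain, fun l hl => hl, rfl, ?_⟩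
      intro h hh
      rw [List.getLast?_concat] at hh
      simp at hh
      subst hh
      rfl
  | true =>
      obtain ⟨hc1, hc2, hc3⟩ := List.isChain_append.mp hchain
      have hne : core' ≠ [] := by
        rintro rfl
        simp at hfalse
      refine ⟨m, core', by simp [wprod], hne, hc1, fun l hl => List.mem_append_left _ hl, ?_, ?_⟩
      · rw [List.head?_append_of_ne_nil _ hne]
      · intro h hh
        have := hc3 h hh ⟨true, m⟩ rfl
        simpa using this

private lemma conj_inj_aux {y : CoprodI (Fac C)} (hy : y ≠ 1)
    (hpure : ∀ m : ULift (Multiplicative ℤ), y ≠ CoprodI.of (M := Fac C) (i := true) m) :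
    ∃ e : ℕ → ℤ, Function.Injective (fun n : ℕ =>
      CoprodI.of (M := Fac C) (i := true) (ULift.up (Multiplicative.ofAdd (e n))) * y *
        (CoprodI.of (M := Fac C) (i := true) (ULift.up (Multiplicative.ofAdd (e n))))⁻¹) := by
  classical
  have w := Word.equiv y
  have hw : (Word.equiv y).prod = y := Word.equiv.symm_apply_apply y
  have hPL : wprod (Word.equiv y).toList = y := hw
  have hfalse : ∃ l ∈ (Word.equiv y).toList, l.fst = false := by
    by_contra hall
    push_neg at hall
    have halltrue : ∀ l ∈ (Word.equiv y).toList, l.fst = true := by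
      intro l hl; have := hall l hl; simpa using this
    rcases hL : (Word.equiv y).toList with _ | ⟨l, _ | ⟨l2, rest⟩⟩
    · rw [hL] at hPL
      exact hy (by simpa [wprod] using hPL.symm)
    · rcases l with ⟨b, m⟩
      have hb : b = true := halltrue ⟨b, m⟩ (by rw [hL]; simp)
      subst hb
      rw [hL] at hPL
      exact hpure m (by simpa [wprod] using hPL.symm)
    · have hc := (Word.equiv y).chain_ne
      rw [hL] at hc
      have h1 := halltrue l (by rw [hL]; simp)
      have h2 := halltrue l2 (by rw [hL]; simp)
      have := (List.isChain_cons_cons.mp hc).1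
      rw [h1, h2] at this
      exact this rfl
  obtain ⟨a, core₁, h1, hc1ne, hc1chain, hc1sub, hc1head⟩ :=
    front (Word.equiv y).toList (Word.equiv y).chain_ne hfalse
  have hfalse₁ : ∃ l ∈ core₁, l.fst = false := by
    rcases core₁ with _ | ⟨c0, ct⟩
    · exact absurd rfl hc1ne
    · exact ⟨c0, List.mem_cons_self, hc1head c0 rfl⟩
  obtain ⟨b, core, h2, hcne, hchain, hsub, hhead, hlast⟩ := back core₁ hc1chain hfalse₁
  have hy' : y = CoprodI.of (M := Fac C) (i := true) a * wprod core
      * CoprodI.of (M := Fac C) (i := true) b := by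
    rw [← hPL, h1, h2, mul_assoc]
  have hcore_ne_one : ∀ l ∈ core, l.snd ≠ 1 := fun l hl =>
    (Word.equiv y).ne_one l (hc1sub _ (hsub _ hl))
  rcases core with _ | ⟨c0, ct⟩
  · exact absurd rfl hcne
  have hc0 : c0.fst = false := by
    have : c0 ∈ core₁.head? := by rw [← hhead]; rfl
    exact hc1head c0 this
  -- exponents
  set p : ℤ := Multiplicative.toAdd a.down with hp
  set q : ℤ := Multiplicative.toAdd b.down with hq
  set e : ℕ → ℤ := fun n => (n : ℤ) + |p| + |q| + 1 with he
  have hap : ∀ n : ℕ, e n + p ≠ 0 := by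
    intro n
    have h1 := neg_abs_le p
    have h2 := abs_nonneg q
    have h3 : (0:ℤ) ≤ (n:ℤ) := Int.natCast_nonneg n
    simp only [he]
    intro hcon
    linarith
  have hbq : ∀ n : ℕ, q + -(e n) ≠ 0 := by
    intro n
    have h1 := le_abs_self q
    have h2 := abs_nonneg p
    have h3 : (0:ℤ) ≤ (n:ℤ) := Int.natCast_nonneg n
    simp only [he]
    intro hcon
    linarith
  -- the words
  set An : ℕ → ULift (Multiplicative ℤ) :=
    fun n => ULift.up (Multiplicative.ofAdd (e n) * a.down) with hAn
  set Bn : ℕ → ULift (Multiplicative ℤ) :=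
    fun n => ULift.up (b.down * Multiplicative.ofAdd (-(e n))) with hBn
  have hAn1 : ∀ n, An n ≠ 1 := by
    intro n hcon
    apply hap n
    have := congrArg (fun x => Multiplicative.toAdd x.down) hcon
    simpa [hAn, hp] using this
  have hBn1 : ∀ n, Bn n ≠ 1 := by
    intro n hcon
    apply hbq n
    have := congrArg (fun x => Multiplicative.toAdd x.down) hcon
    simpa [hBn, hq] using this
  set W : ℕ → Word (Fac C) := fun n =>
    { toList := (⟨true, An n⟩ :: (c0 :: ct)) ++ [⟨true, Bn n⟩]
      ne_one := by
        intro l hl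
        rcases List.mem_append.mp hl with hl | hl
        · rcases List.mem_cons.mp hl with rfl | hl
          · exact hAn1 n
          · exact hcore_ne_one l hl
        · rw [List.mem_singleton] at hl
          subst hl
          exact hBn1 n
      chain_ne := by
        apply List.isChain_append.mpr
        refine ⟨?_, List.isChain_singleton _, ?_⟩
        · apply List.isChain_cons_cons.mpr
          exact ⟨by simp [hc0], hchain⟩
        · intro x hx z hz
          rw [List.getLast?_cons_cons] at hx
          have hxlast := hlast x hx
          simp at hz
          subst hz
          simp [hxlast] } with hW
  have hWprod : ∀ n, (W n).prod =
      CoprodI.of (M := Fac C) (i := true) (ULift.up (Multiplicative.ofAdd (e n))) * y *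
        (CoprodI.of (M := Fac C) (i := true) (ULift.up (Multiplicative.ofAdd (e n))))⁻¹ := by
    intro n
    have hup : An n = ULift.up (Multiplicative.ofAdd (e n)) * a := by
      cases a; rfl
    have hdown : Bn n = b * ULift.up (Multiplicative.ofAdd (-(e n))) := by
      cases b; rfl
    have hinv : (CoprodI.of (M := Fac C) (i := true) (ULift.up (Multiplicative.ofAdd (e n))))⁻¹
        = CoprodI.of (M := Fac C) (i := true) (ULift.up (Multiplicative.ofAdd (-(e n)))) := by
      rw [← map_inv]
      congr 1
    show wprod ((⟨true, An n⟩ :: (c0 :: ct)) ++ [⟨true, Bn n⟩]) = _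
    rw [hy', hinv]
    simp only [wprod, List.map_append, List.map_cons, List.prod_append, List.prod_cons,
      List.map_nil, List.prod_nil, mul_one, hup, hdown, map_mul]
    simp only [wprod] at *
    group
  exact ⟨e, by
    intro n₁ n₂ hcon
    have hprodeq : (W n₁).prod = (W n₂).prod := by
      rw [hWprod n₁, hWprod n₂]
      exact hcon
    have hWeq : W n₁ = W n₂ := Word.equiv.symm.injective hprodeq
    have hlist := congrArg Word.toList hWeq
    have hlasteq := congrArg List.getLast? hlist
    rw [List.getLast?_concat, List.getLast?_concat] at hlasteq
    have hBeq : Bn n₁ = Bn n₂ := by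
      exact eq_of_heq (Sigma.mk.inj_iff.mp (Option.some.inj hlasteq)).2
    have : q + -(e n₁) = q + -(e n₂) := by
      have := congrArg (fun x => Multiplicative.toAdd x.down) hBeq
      simpa [hBn, hq] using this
    have : e n₁ = e n₂ := by omega
    simp only [he] at this
    omega⟩

/-- The free product `C ∗ ℤ` of any group `C` with the infinite cyclic group has no non-trivial
finite normal subgroup. -/
theorem finite_normal_subgroup_of_coprod_int_eq_bot
    (C : Type*) [Group C] (H : Subgroup (Monoid.Coprod C (Multiplicative ℤ)))
    (hH : H.Normal) (hfin : Finite ↥H) : H = ⊥ := by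
  by_contra hne
  obtain ⟨⟨x, hxH⟩, hx1⟩ := Subgroup.ne_bot_iff_exists_ne_one.mp hne
  have hx1' : x ≠ 1 := by simpa [Subtype.ext_iff] using hx1
  set y := phiC C x with hydef
  have hy : y ≠ 1 := by
    intro h
    apply hx1'
    have := congrArg (psiC C) h
    rwa [psi_phi, map_one] at this
  by_cases hpure : ∃ m : ULift (Multiplicative ℤ), y = CoprodI.of (M := Fac C) (i := true) m
  · obtain ⟨m, hm⟩ := hpure
    have hm1 : m ≠ 1 := by
      rintro rfl
      rw [map_one] at hm
      exact hy hm
    have hnpos : 0 < orderOf (⟨x, hxH⟩ : ↥H) := orderOf_pos _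
    have hxn : x ^ orderOf (⟨x, hxH⟩ : ↥H) = 1 := by
      have := pow_orderOf_eq_one (⟨x, hxH⟩ : ↥H)
      exact Subtype.ext_iff.mp this
    have : y ^ orderOf (⟨x, hxH⟩ : ↥H) = 1 := by
      rw [hydef, ← map_pow, hxn, map_one]
    rw [hm, ← map_pow] at this
    have hmn : m ^ orderOf (⟨x, hxH⟩ : ↥H) = 1 := by
      have h1 : CoprodI.of (M := Fac C) (i := true) (m ^ orderOf (⟨x, hxH⟩ : ↥H))
          = CoprodI.of (M := Fac C) (i := true) 1 := by rw [this, map_one]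
      exact CoprodI.of_injective (M := Fac C) true h1
    have hdown : m.down ^ orderOf (⟨x, hxH⟩ : ↥H) = 1 := by
      have := congrArg ULift.down hmn
      simpa using this
    have ht : Multiplicative.toAdd m.down ≠ 0 := by
      intro h
      apply hm1
      have : m.down = 1 := by
        have := congrArg Multiplicative.ofAdd h
        simpa using this
      cases m
      simpa [ULift.ext_iff] using this
    have hz : (orderOf (⟨x, hxH⟩ : ↥H) : ℤ) * Multiplicative.toAdd m.down = 0 := by
      have := congrArg Multiplicative.toAdd hdown
      simpa [toAdd_pow, nsmul_eq_mul] using this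
    rcases mul_eq_zero.mp hz with h | h
    · have : orderOf (⟨x, hxH⟩ : ↥H) = 0 := by exact_mod_cast h
      omega
    · exact ht h
  · push_neg at hpure
    obtain ⟨e, hinj⟩ := conj_inj_aux hy hpure
    set g : ℕ → ↥H := fun n =>
      ⟨psiC C (CoprodI.of (M := Fac C) (i := true) (ULift.up (Multiplicative.ofAdd (e n)))) * x *
        (psiC C (CoprodI.of (M := Fac C) (i := true) (ULift.up (Multiplicative.ofAdd (e n)))))⁻¹,
        hH.conj_mem x hxH _⟩ with hg
    have hginj : Function.Injective g := by
      intro n₁ n₂ hcon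
      apply hinj
      have hval := Subtype.ext_iff.mp hcon
      simp only [hg] at hval
      have := congrArg (phiC C) hval
      simpa only [map_mul, map_inv, phi_psi, hydef] using this
    haveI := hfin
    haveI : Finite ℕ := Finite.of_injective g hginj
    exact not_finite ℕ
end
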